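/- Assume (H2): ±i are simple eigenvalues of A, i.e. dim 𝒩(i−A_c) = 1 = codim ℛ(i−A_c) and every nonzero ψ ∈ 𝒩(i−A_c) satisfies ψ ∉ ℛ(i−A_c). Fix ψ⋆ ∈ 𝒩(i−A_c) ∖ {0} and set u⋆ := L₁ψ⋆. Then ℛ(T₁) ⊕ span_ℝ{u⋆, Au⋆} = Y₁: every element of Y₁ is uniquely the sum of an element of the range of T₁ and a real linear combination of u⋆ and Au⋆, and u⋆, Au⋆ are linearly independent. -/
import Mathlib


open Real Filter Set Function MeasureTheory
open scoped ENNReal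

noncomputable section

namespace HopfStmt

/-- The sup part of the periodic Hölder norm. -/
def supN {E : Type*} [NormedAddCommGroup E] (u : ℝ → E) : ℝ := ⨆ t : ℝ, ‖u t‖

/-- The Hölder seminorm part. -/
def holS {E : Type*} [NormedAddCommGroup E] (β : ℝ) (u : ℝ → E) : ℝ :=
  ⨆ p : ℝ × ℝ, ‖u p.1 - u p.2‖ / |p.1 - p.2| ^ β

/-- The norm of `C^β_{2π}(ℝ, E)`. -/
def holderN {E : Type*} [NormedAddCommGroup E] (β : ℝ) (u : ℝ → E) : ℝ :=
  supN u + holS β u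

/-- Membership in `C^β_{2π}(ℝ, E)`: `2π`-periodic and `β`-Hölder continuous. -/
def MemHolder {E : Type*} [NormedAddCommGroup E] (β : ℝ) (u : ℝ → E) : Prop :=
  Function.Periodic u (2 * π) ∧ ∃ C : ℝ, ∀ s t : ℝ, ‖u s - u t‖ ≤ C * |s - t| ^ β

/-- Membership in the span of the first cosine and sine modes: `w = a ⊗ c₁ + b ⊗ s₁`. -/
def memSp1 {E : Type*} [AddCommGroup E] [Module ℝ E] (w : ℝ → E) : Prop :=
  ∃ a b : E, ∀ t : ℝ, w t = Real.cos t • a + Real.sin t • b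

/-- `L₁ ψ := Re (ψ ⊗ e₁)`, i.e. `(L₁ψ)(t) = cos t • ψ₁ - sin t • ψ₂` for `ψ = ψ₁ + iψ₂`. -/
def L1 {E : Type*} [AddCommGroup E] [Module ℝ E] (ψ : E × E) : ℝ → E :=
  fun t => Real.cos t • ψ.1 - Real.sin t • ψ.2

/-- Multiplication by the complex scalar `c` on the complexification `E_c = E × E`. -/
def csmul {E : Type*} [AddCommGroup E] [Module ℝ E] (c : ℂ) (x : E × E) : E × E :=
  (c.re • x.1 - c.im • x.2, c.im • x.1 + c.re • x.2)

/-- Complex conjugation on the complexification. -/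
def conjC {E : Type*} [AddCommGroup E] (x : E × E) : E × E := (x.1, -x.2)

variable {V : Type*} [NormedAddCommGroup V] [NormedSpace ℝ V]
variable {U : Type*} [NormedAddCommGroup U] [NormedSpace ℝ U]

/-- The complexified inclusion `ι_c : U_c → V_c`. -/
def iotaC (ι : U →L[ℝ] V) (ψ : U × U) : V × V := (ι ψ.1, ι ψ.2)

/-- The complexified operator `A_c : U_c → V_c`. -/
def AcC (A : U →L[ℝ] V) (ψ : U × U) : V × V := (A ψ.1, A ψ.2)

/-- The operator `c - A_c : U_c → V_c` for a complex scalar `c`. -/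
def cMinusA (ι A : U →L[ℝ] V) (c : ℂ) (ψ : U × U) : V × V :=
  csmul c (iotaC ι ψ) - AcC A ψ

/-- The kernel `𝒩(i - A_c) ⊆ U_c`. -/
def kerIA (ι A : U →L[ℝ] V) : Set (U × U) := {ψ | cMinusA ι A Complex.I ψ = 0}

/-- The range `ℛ(i - A_c) ⊆ V_c`. -/
def ranIA (ι A : U →L[ℝ] V) : Set (V × V) := Set.range (cMinusA ι A Complex.I)

/-- `V♯ := ℛ(i - A_c) ∩ ℛ(-i - A_c)`. -/
def Vsharp (ι A : U →L[ℝ] V) : Set (V × V) :=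
  Set.range (cMinusA ι A Complex.I) ∩ Set.range (cMinusA ι A (-Complex.I))

/-- The `V`-valued time derivative of `w : ℝ → U` (through the inclusion `ι`). -/
def Xder (ι : U →L[ℝ] V) (w : ℝ → U) : ℝ → V := fun t => deriv (fun s => ι (w s)) t

/-- Membership in `X := C^{1+β}_{2π}(ℝ,V) ∩ C^β_{2π}(ℝ,U)`. -/
def MemX (β : ℝ) (ι : U →L[ℝ] V) (w : ℝ → U) : Prop :=
  MemHolder β w ∧ (∀ t : ℝ, DifferentiableAt ℝ (fun s => ι (w s)) t) ∧
    MemHolder β (Xder ι w)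

/-- The norm of `X`: `‖w‖_X = ‖w‖_{V,1+β} + ‖w‖_{U,β}`. -/
def normX (β : ℝ) (ι : U →L[ℝ] V) (w : ℝ → U) : ℝ :=
  (holderN β (fun t => ι (w t)) + holderN β (Xder ι w)) + holderN β w

/-- `T₁ w := ẇ - A w`. -/
def T1op (ι A : U →L[ℝ] V) (w : ℝ → U) : ℝ → V := fun t => Xder ι w t - A (w t)

/-- Hypothesis (H2): `±i` are simple eigenvalues of `A`, i.e.
`dim 𝒩(i - A_c) = 1 = codim ℛ(i - A_c)` and nonzero kernel elements do not lie in the range. -/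
def H2hyp (ι A : U →L[ℝ] V) : Prop :=
  (∃ ψ ∈ kerIA ι A, ψ ≠ 0 ∧ ∀ φ ∈ kerIA ι A, ∃ c : ℂ, φ = csmul c ψ) ∧
  (∃ χ : V × V, χ ∉ ranIA ι A ∧ ∀ v : V × V, ∃ c : ℂ, ∃ r ∈ ranIA ι A, v = r + csmul c χ) ∧
  (∀ ψ ∈ kerIA ι A, ψ ≠ 0 → iotaC ι ψ ∉ ranIA ι A)

/-- Hypothesis (H4): `ik ∈ ρ(A_c)` for `k ∈ ℤ \ {-1, 1}`. -/
def H4hyp (ι A : U →L[ℝ] V) : Prop :=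
  ∀ k : ℤ, k ≠ 1 → k ≠ -1 → Function.Bijective (cMinusA ι A (Complex.I * (k : ℂ)))

/-- Hypothesis (H5): `‖(in - A_c)⁻¹‖ ≤ M / n` for `n = 2, 3, 4, ...`. -/
def H5hyp (ι A : U →L[ℝ] V) : Prop :=
  ∃ M : ℝ, 0 < M ∧ ∀ n : ℕ, 2 ≤ n →
    ∀ ψ : U × U, (n : ℝ) * ‖iotaC ι ψ‖ ≤ M * ‖cMinusA ι A (Complex.I * (n : ℂ)) ψ‖

/-- Hypothesis (H3): the eigenvalue branch `μ(λ)` of `A_c + (h_u(λ,0))_c` through `μ(0) = i`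
satisfies the transversality condition `Re μ'(0) ≠ 0`. -/
def H3hyp (ι A : U →L[ℝ] V) (h : ℝ → U → V) : Prop :=
  ∃ (ε : ℝ) (μ : ℝ → ℂ) (ψb : ℝ → U × U) (μ' : ℂ), 0 < ε ∧
    μ 0 = Complex.I ∧ ψb 0 ∈ kerIA ι A ∧ ψb 0 ≠ 0 ∧
    ContinuousOn ψb (Metric.ball (0 : ℝ) ε) ∧
    (∀ lam ∈ Metric.ball (0 : ℝ) ε,
      AcC A (ψb lam) + (fderiv ℝ (h lam) 0 (ψb lam).1, fderiv ℝ (h lam) 0 (ψb lam).2)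
        = csmul (μ lam) (iotaC ι (ψb lam))) ∧
    HasDerivAt μ μ' 0 ∧ μ'.re ≠ 0

/-- Unbundled notion: `f : (E, NE) → (F, NF)` is of class `C²` on `D` (Fréchet sense). -/
def UFC2On {E F : Type*} [AddCommGroup E] [Module ℝ E] [AddCommGroup F] [Module ℝ F]
    (NE : E → ℝ) (NF : F → ℝ) (D : Set E) (f : E → F) : Prop :=
  ∃ (D1 : E → E → F) (D2 : E → E → E → F),
    (∀ x ∈ D, IsLinearMap ℝ (D1 x) ∧ ∃ C : ℝ, ∀ e, NF (D1 x e) ≤ C * NE e) ∧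
    (∀ x ∈ D, ∀ ε > (0 : ℝ), ∃ d > (0 : ℝ), ∀ y ∈ D, NE (y - x) < d →
      NF (f y - f x - D1 x (y - x)) ≤ ε * NE (y - x)) ∧
    (∀ x ∈ D, (∀ e, IsLinearMap ℝ (D2 x e)) ∧ (∀ e', IsLinearMap ℝ (fun e => D2 x e e')) ∧
      ∃ C : ℝ, ∀ e e', NF (D2 x e e') ≤ C * NE e * NE e') ∧
    (∀ x ∈ D, ∀ ε > (0 : ℝ), ∃ d > (0 : ℝ), ∀ y ∈ D, NE (y - x) < d →
      ∀ e, NF (D1 y e - D1 x e - D2 x (y - x) e) ≤ ε * NE (y - x) * NE e) ∧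
    (∀ x ∈ D, ∀ ε > (0 : ℝ), ∃ d > (0 : ℝ), ∀ y ∈ D, NE (y - x) < d →
      ∀ e e', NF (D2 y e e' - D2 x e e') ≤ ε * NE e * NE e')

/-- Unbundled notion: `f : ℝ → (E, NE)` is `C¹` on `s` with derivative `f'`. -/
def UC1On {E : Type*} [AddCommGroup E] [Module ℝ E] (NE : E → ℝ) (s : Set ℝ)
    (f f' : ℝ → E) : Prop :=
  (∀ a ∈ s, ∀ ε > (0 : ℝ), ∃ d > (0 : ℝ), ∀ b ∈ s, |b - a| < d →
    NE (f b - f a - (b - a) • f' a) ≤ ε * |b - a|) ∧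
  (∀ a ∈ s, ∀ ε > (0 : ℝ), ∃ d > (0 : ℝ), ∀ b ∈ s, |b - a| < d → NE (f' b - f' a) ≤ ε)


section AuxLemmas

lemma csmul_zero_c {E : Type*} [AddCommGroup E] [Module ℝ E] (x : E × E) :
    csmul (0 : ℂ) x = 0 := by simp [csmul]

lemma csmul_one_c {E : Type*} [AddCommGroup E] [Module ℝ E] (x : E × E) :
    csmul (1 : ℂ) x = x := by simp [csmul]

lemma csmul_mul {E : Type*} [AddCommGroup E] [Module ℝ E] (c d : ℂ) (x : E × E) :
    csmul (c * d) x = csmul c (csmul d x) := by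
  simp only [csmul, Complex.mul_re, Complex.mul_im, Prod.mk.injEq]
  constructor <;> module

lemma csmul_sub' {E : Type*} [AddCommGroup E] [Module ℝ E] (c : ℂ) (x y : E × E) :
    csmul c (x - y) = csmul c x - csmul c y := by
  simp only [csmul, Prod.fst_sub, Prod.snd_sub, Prod.mk_sub_mk, smul_sub, Prod.mk.injEq]
  constructor <;> abel

lemma cMinusA_def (ι A : U →L[ℝ] V) (c : ℂ) (ψ : U × U) : cMinusA ι A c ψ =
    (c.re • ι ψ.1 - c.im • ι ψ.2 - A ψ.1, c.im • ι ψ.1 + c.re • ι ψ.2 - A ψ.2) := rfl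

lemma cMinusA_sub (ι A : U →L[ℝ] V) (c : ℂ) (ψ φ : U × U) :
    cMinusA ι A c (ψ - φ) = cMinusA ι A c ψ - cMinusA ι A c φ := by
  simp only [cMinusA_def, Prod.fst_sub, Prod.snd_sub, map_sub, Prod.mk_sub_mk,
    smul_sub, Prod.mk.injEq]
  constructor <;> abel

lemma cMinusA_csmul (ι A : U →L[ℝ] V) (c d : ℂ) (ψ : U × U) :
    cMinusA ι A c (csmul d ψ) = csmul d (cMinusA ι A c ψ) := by
  simp only [cMinusA_def, csmul, map_sub, map_add, _root_.map_smul, Prod.mk.injEq]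
  constructor <;> module

lemma cMinusA_zeroU (ι A : U →L[ℝ] V) (c : ℂ) : cMinusA ι A c (0 : U × U) = 0 := by
  simp [cMinusA_def]

end AuxLemmas

/-- **(4.10).** Assume (H2), fix `ψ⋆ ∈ 𝒩(i - A_c) \ {0}` and set `u⋆ := L₁ψ⋆`.  Then
`ℛ(T₁) ⊕ span_ℝ{u⋆, Au⋆} = Y₁`: the functions `u⋆, Au⋆` (viewed in `Y₁` via `ι`) are
linearly independent and every element of `Y₁` is uniquely the sum of an element of
`ℛ(T₁)` and a real linear combination of `u⋆` and `Au⋆`. -/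
theorem range_T1_direct_sum_span
    {V : Type*} [NormedAddCommGroup V] [NormedSpace ℝ V] [CompleteSpace V]
    {U : Type*} [NormedAddCommGroup U] [NormedSpace ℝ U] [CompleteSpace U]
    (ι A : U →L[ℝ] V) (hι : Function.Injective ι)
    (hUnorm : ∀ u : U, ‖u‖ = ‖A u‖) (hAbij : Function.Bijective A)
    (hH2 : H2hyp ι A)
    (ψs : U × U) (hψs : ψs ∈ kerIA ι A) (hψs0 : ψs ≠ 0) :
    -- `u⋆` and `Au⋆` are linearly independent:
    (∀ p q : ℝ,
      (fun t : ℝ => p • ι (L1 ψs t) + q • A (L1 ψs t)) = (0 : ℝ → V) →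
        p = 0 ∧ q = 0) ∧
    -- unique decomposition of every element of `Y₁`:
    ∀ y : ℝ → V, memSp1 y →
      ∃! z : (ℝ → V) × ℝ × ℝ,
        (∃ w : ℝ → U, memSp1 w ∧ T1op ι A w = z.1) ∧
        y = fun t => z.1 t + z.2.1 • ι (L1 ψs t) + z.2.2 • A (L1 ψs t) := by
  classical
  -- kernel relations
  have hk : cMinusA ι A Complex.I ψs = 0 := hψs
  have hk1 : A ψs.1 = -(ι ψs.2) := by
    have h := congrArg Prod.fst hk
    simp only [cMinusA_def, Complex.I_re, Complex.I_im, zero_smul, one_smul, zero_sub,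
      Prod.fst_zero] at h
    rw [sub_eq_zero] at h
    exact h.symm
  have hk2 : A ψs.2 = ι ψs.1 := by
    have h := congrArg Prod.snd hk
    simp only [cMinusA_def, Complex.I_re, Complex.I_im, zero_smul, one_smul, add_zero,
      Prod.snd_zero] at h
    rw [sub_eq_zero] at h
    exact h.symm
  -- closure properties of the range
  have mem0 : (0 : V × V) ∈ ranIA ι A := ⟨0, cMinusA_zeroU ι A _⟩
  have memsub : ∀ {r r' : V × V}, r ∈ ranIA ι A → r' ∈ ranIA ι A → r - r' ∈ ranIA ι A := by
    rintro _ _ ⟨ψ, rfl⟩ ⟨φ, rfl⟩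
    exact ⟨ψ - φ, cMinusA_sub ι A _ ψ φ⟩
  have memcs : ∀ (c : ℂ) {r : V × V}, r ∈ ranIA ι A → csmul c r ∈ ranIA ι A := by
    rintro c _ ⟨ψ, rfl⟩
    exact ⟨csmul c ψ, cMinusA_csmul ι A _ c ψ⟩
  have hnotin : iotaC ι ψs ∉ ranIA ι A := hH2.2.2 ψs hψs hψs0
  have huniq : ∀ c : ℂ, csmul c (iotaC ι ψs) ∈ ranIA ι A → c = 0 := by
    intro c hc
    by_contra h0
    apply hnotin
    have h1 := memcs c⁻¹ hc
    rwa [← csmul_mul, inv_mul_cancel₀ h0, csmul_one_c] at h1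
  have hexist : ∀ v : V × V, ∃ r ∈ ranIA ι A, ∃ c : ℂ, v = r + csmul c (iotaC ι ψs) := by
    obtain ⟨χ, hχ, hdec⟩ := hH2.2.1
    obtain ⟨c₀, r₀, hr₀, h0⟩ := hdec (iotaC ι ψs)
    have hc₀ : c₀ ≠ 0 := by
      rintro rfl
      exact hnotin (by rw [h0, csmul_zero_c, add_zero]; exact hr₀)
    intro v
    obtain ⟨c, r, hr, hv⟩ := hdec v
    refine ⟨r - csmul (c * c₀⁻¹) r₀, memsub hr (memcs _ hr₀), c * c₀⁻¹, ?_⟩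
    have hx : iotaC ι ψs - r₀ = csmul c₀ χ := by rw [h0]; abel
    have hcχ : csmul c χ = csmul (c * c₀⁻¹) (iotaC ι ψs) - csmul (c * c₀⁻¹) r₀ := by
      rw [← csmul_sub', hx, ← csmul_mul, mul_assoc, inv_mul_cancel₀ hc₀, mul_one]
    rw [hv, hcχ]
    abel
  -- T1 on the first Fourier modes
  have hT1 : ∀ a b : U, T1op ι A (fun t => Real.cos t • a + Real.sin t • b)
      = fun t => Real.cos t • (ι b - A a) + Real.sin t • (-(ι a) - A b) := by
    intro a b
    funext t
    have hfun : (fun s : ℝ => ι (Real.cos s • a + Real.sin s • b))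
        = fun s : ℝ => Real.cos s • ι a + Real.sin s • ι b := by
      funext s; simp
    have hd : HasDerivAt (fun s : ℝ => Real.cos s • ι a + Real.sin s • ι b)
        ((-Real.sin t) • ι a + Real.cos t • ι b) t :=
      ((Real.hasDerivAt_cos t).smul_const (ι a)).add
        ((Real.hasDerivAt_sin t).smul_const (ι b))
    simp only [T1op, Xder]
    rw [hfun, hd.deriv]
    simp only [map_add, _root_.map_smul]
    module
  -- coordinates are unique
  have hcoord : ∀ {c d c' d' : V}, (∀ t : ℝ, Real.cos t • c + Real.sin t • d
      = Real.cos t • c' + Real.sin t • d') → c = c' ∧ d = d' := by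
    intro c d c' d' h
    have h0 := h 0
    have h1 := h (Real.pi / 2)
    simp at h0 h1
    exact ⟨h0, h1⟩
  -- range elements as T1 images
  have key : ∀ r ∈ ranIA ι A, ∃ w : ℝ → U, memSp1 w ∧
      T1op ι A w = fun t => Real.cos t • r.1 + Real.sin t • (-r.2) := by
    rintro _ ⟨ψ, rfl⟩
    refine ⟨fun t => Real.cos t • ψ.1 + Real.sin t • (-ψ.2), ⟨ψ.1, -ψ.2, fun t => rfl⟩, ?_⟩
    rw [hT1]
    funext t
    simp only [cMinusA_def, Complex.I_re, Complex.I_im, zero_smul, one_smul, zero_sub,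
      add_zero, map_neg]
    module
  have key2 : ∀ w : ℝ → U, memSp1 w → ∃ r ∈ ranIA ι A,
      T1op ι A w = fun t => Real.cos t • r.1 + Real.sin t • (-r.2) := by
    rintro w ⟨a, b, hw⟩
    refine ⟨cMinusA ι A Complex.I (a, -b), ⟨(a, -b), rfl⟩, ?_⟩
    have hww : w = fun t => Real.cos t • a + Real.sin t • b := funext hw
    rw [hww, hT1]
    funext t
    simp only [cMinusA_def, Complex.I_re, Complex.I_im, zero_smul, one_smul, zero_sub,
      add_zero, map_neg]
    module
  -- the span part in coordinates
  have hPQ : ∀ (p q : ℝ) (t : ℝ), p • ι (L1 ψs t) + q • A (L1 ψs t)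
      = Real.cos t • (p • ι ψs.1 - q • ι ψs.2)
        + Real.sin t • (-(p • ι ψs.2) - q • ι ψs.1) := by
    intro p q t
    simp only [L1, map_sub, _root_.map_smul, hk1, hk2]
    module
  constructor
  · -- linear independence
    intro p q hpq
    have hzero : ∀ t : ℝ, Real.cos t • (p • ι ψs.1 - q • ι ψs.2)
        + Real.sin t • (-(p • ι ψs.2) - q • ι ψs.1)
        = Real.cos t • (0 : V) + Real.sin t • (0 : V) := by
      intro t
      have h := congrFun hpq t
      simp only [Pi.zero_apply] at h
      rw [← hPQ p q t, h]
      simp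
    obtain ⟨h1, h2⟩ := hcoord hzero
    set c2 : ℂ := (p : ℂ) + (q : ℂ) * Complex.I with hc2
    have hre : c2.re = p := by simp [hc2]
    have him : c2.im = q := by simp [hc2]
    have hcz : csmul c2 (iotaC ι ψs) = 0 := by
      have h2' : c2.im • ι ψs.1 + c2.re • ι ψs.2 = 0 := by
        rw [hre, him]
        have hrw : q • ι ψs.1 + p • ι ψs.2 = -(-(p • ι ψs.2) - q • ι ψs.1) := by module
        rw [hrw, h2, neg_zero]
      have h1' : c2.re • ι ψs.1 - c2.im • ι ψs.2 = 0 := by rw [hre, him]; exact h1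
      show (c2.re • ι ψs.1 - c2.im • ι ψs.2, c2.im • ι ψs.1 + c2.re • ι ψs.2) = 0
      rw [Prod.mk_eq_zero]
      exact ⟨h1', h2'⟩
    have hc0 : c2 = 0 := huniq c2 (by rw [hcz]; exact mem0)
    constructor
    · rw [← hre, hc0, Complex.zero_re]
    · rw [← him, hc0, Complex.zero_im]
  · -- unique decomposition
    rintro y ⟨ya, yb, hy⟩
    obtain ⟨r, hr, cc, hcc⟩ := hexist (ya, -yb)
    obtain ⟨w, hw, hTw⟩ := key r hr
    have h1 : ya = r.1 + (cc.re • ι ψs.1 - cc.im • ι ψs.2) := by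
      have h := congrArg Prod.fst hcc
      simpa only [csmul, iotaC, Prod.fst_add] using h
    have h2 : -yb = r.2 + (cc.im • ι ψs.1 + cc.re • ι ψs.2) := by
      have h := congrArg Prod.snd hcc
      simpa only [csmul, iotaC, Prod.snd_add] using h
    have hyb : yb = -(r.2 + (cc.im • ι ψs.1 + cc.re • ι ψs.2)) := by
      rw [← h2, neg_neg]
    have hdecomp : y = fun t =>
        T1op ι A w t + cc.re • ι (L1 ψs t) + cc.im • A (L1 ψs t) := by
      funext t
      rw [hy t, add_assoc, hPQ cc.re cc.im t]
      simp only [hTw]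
      rw [h1, hyb]
      module
    refine ⟨(T1op ι A w, cc.re, cc.im), ⟨⟨w, hw, rfl⟩, hdecomp⟩, ?_⟩
    rintro ⟨z₁, p', q'⟩ ⟨⟨w', hw', hTw'⟩, hy'⟩
    obtain ⟨r', hr', hTr'⟩ := key2 w' hw'
    have hTwz : T1op ι A w' = z₁ := hTw'
    have hz1f : z₁ = fun t => Real.cos t • r'.1 + Real.sin t • (-r'.2) :=
      hTwz.symm.trans hTr'
    have hyc : ∀ t : ℝ, Real.cos t • (r'.1 + (p' • ι ψs.1 - q' • ι ψs.2))
        + Real.sin t • (-r'.2 + (-(p' • ι ψs.2) - q' • ι ψs.1))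
        = Real.cos t • ya + Real.sin t • yb := by
      intro t
      have h := congrFun hy' t
      rw [hy t] at h
      simp only [hz1f] at h
      rw [add_assoc, hPQ p' q' t] at h
      rw [h]
      module
    obtain ⟨hA1, hA2⟩ := hcoord hyc
    -- hA1 : r'.1 + (p' • ι ψs.1 - q' • ι ψs.2) = ya
    -- hA2 : -r'.2 + (-(p' • ι ψs.2) - q' • ι ψs.1) = yb
    set c3 : ℂ := ((p' - cc.re : ℝ) : ℂ) + ((q' - cc.im : ℝ) : ℂ) * Complex.I with hc3
    have hre3 : c3.re = p' - cc.re := by simp [hc3]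
    have him3 : c3.im = q' - cc.im := by simp [hc3]
    have hmem : csmul c3 (iotaC ι ψs) = r - r' := by
      have h' : r'.1 + (p' • ι ψs.1 - q' • ι ψs.2)
          = r.1 + (cc.re • ι ψs.1 - cc.im • ι ψs.2) := hA1.trans h1
      have hA2' : -r'.2 + (-(p' • ι ψs.2) - q' • ι ψs.1)
          = -(r.2 + (cc.im • ι ψs.1 + cc.re • ι ψs.2)) := hA2.trans hyb
      have hs1 : r.1 - r'.1 = (p' • ι ψs.1 - q' • ι ψs.2)
          - (cc.re • ι ψs.1 - cc.im • ι ψs.2) := by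
        rw [sub_eq_sub_iff_add_eq_add]
        rw [← h']
        abel
      have hs2 : r.2 - r'.2 = -(-(p' • ι ψs.2) - q' • ι ψs.1)
          - (cc.im • ι ψs.1 + cc.re • ι ψs.2) := by
        rw [sub_eq_sub_iff_add_eq_add, ← neg_inj, ← hA2']
        abel
      rw [Prod.ext_iff]
      constructor
      · show c3.re • ι ψs.1 - c3.im • ι ψs.2 = (r - r').1
        rw [hre3, him3, Prod.fst_sub, hs1]
        module
      · show c3.im • ι ψs.1 + c3.re • ι ψs.2 = (r - r').2
        rw [hre3, him3, Prod.snd_sub, hs2]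
        module
    have hc3z : c3 = 0 := huniq c3 (by rw [hmem]; exact memsub hr hr')
    have hp : p' = cc.re := by
      have h := congrArg Complex.re hc3z
      rw [hre3, Complex.zero_re, sub_eq_zero] at h
      exact h
    have hq : q' = cc.im := by
      have h := congrArg Complex.im hc3z
      rw [him3, Complex.zero_im, sub_eq_zero] at h
      exact h
    have hz₁ : z₁ = T1op ι A w := by
      funext t
      have ha := congrFun hy' t
      simp only at ha
      have hb := congrFun hdecomp t
      rw [hp, hq] at ha
      have hab := hb.symm.trans ha
      exact (add_right_cancel (add_right_cancel hab)).symm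
    rw [hz₁, hp, hq]
end HopfStmt
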